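/- arXiv:1108.2521 — 3 statements merged into one kernel-verified Lean document; each statement's English description precedes it below -/
import Mathlib

section
/- In a properly edge-colored graph G that contains a matching M of size δ − 1, every vertex v not covered by M has at most one edge of each color joining it to the endpoints of any single edge of M; consequently, if G is triangle-free, then any vertex v whose neighborhood is contained in the vertices covered by some matching of size δ − 1 together with at most one other vertex has degree at most 2δ − 2 + 1. In particular: in a triangle-free properly edge-colored graph with minimum degree δ that has no rainbow matching of size δ, the maximum degree satisfies Δ(G) ≤ 2δ − 2. -/
open SimpleGraph

/-- A proper edge coloring: distinct edges sharing a vertex get distinct colors. -/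
def IsProperEdgeColoring {V : Type*} (G : SimpleGraph V) (c : Sym2 V → ℕ) : Prop :=
  ∀ e₁ ∈ G.edgeSet, ∀ e₂ ∈ G.edgeSet, e₁ ≠ e₂ → (∃ v, v ∈ e₁ ∧ v ∈ e₂) → c e₁ ≠ c e₂

/-- A rainbow matching: a set of pairwise disjoint edges of `G` with pairwise distinct colors. -/
def IsRainbowMatching {V : Type*} (G : SimpleGraph V) (c : Sym2 V → ℕ)
    (M : Finset (Sym2 V)) : Prop :=
  (M : Set (Sym2 V)) ⊆ G.edgeSet ∧
  (M : Set (Sym2 V)).Pairwise (fun e f => ∀ v, v ∈ e → v ∉ f) ∧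
  Set.InjOn c (M : Set (Sym2 V))

private lemma adj_of_mem_mem {V : Type*} {G : SimpleGraph V} {e : Sym2 V} (he : e ∈ G.edgeSet)
    {a b : V} (ha : a ∈ e) (hb : b ∈ e) (hab : a ≠ b) : G.Adj a b := by
  induction e with
  | _ x y =>
    rw [Sym2.mem_iff] at ha hb
    rw [SimpleGraph.mem_edgeSet] at he
    rcases ha with rfl | rfl <;> rcases hb with rfl | rfl <;>
      first
        | exact absurd rfl hab
        | exact he
        | exact he.symm

private lemma sym2_ne {V : Type*} {G : SimpleGraph V} {v w₁ w₂ : V}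
    (h1 : G.Adj v w₁) (hne : w₁ ≠ w₂) : s(v, w₁) ≠ s(v, w₂) := by
  intro h
  rw [Sym2.eq_iff] at h
  rcases h with ⟨_, h⟩ | ⟨hv, hw⟩
  · exact hne h
  · exact G.loopless.irrefl v (hw ▸ h1)

/-- In a triangle-free properly edge-colored graph: (1) a vertex `v` uncovered by a matching
`M` of size `δ - 1` has at most one edge of each color joining it to the endpoints of any
single edge of `M`; and (2) if `G - v` has a rainbow matching of size `δ - 1` for every `v`
but `G` has no rainbow matching of size `δ`, then `Δ(G) ≤ 2δ - 2`. -/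
theorem triangle_free_max_degree {V : Type*} [Fintype V] [DecidableEq V]
    (G : SimpleGraph V) [DecidableRel G.Adj] (c : Sym2 V → ℕ)
    (hc : IsProperEdgeColoring G c) (htf : G.CliqueFree 3)
    (hind : ∀ v : V, ∃ M : Finset (Sym2 V), IsRainbowMatching G c M ∧
      M.card = G.minDegree - 1 ∧ ∀ e ∈ M, v ∉ e)
    (hno : ¬ ∃ M : Finset (Sym2 V), IsRainbowMatching G c M ∧ M.card = G.minDegree) :
    (∀ M : Finset (Sym2 V), (M : Set (Sym2 V)) ⊆ G.edgeSet →
      (M : Set (Sym2 V)).Pairwise (fun e f => ∀ u, u ∈ e → u ∉ f) →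
      M.card = G.minDegree - 1 →
      ∀ v : V, (∀ e ∈ M, v ∉ e) → ∀ e ∈ M, ∀ k : ℕ,
        {w | w ∈ e ∧ G.Adj v w ∧ c s(v, w) = k}.ncard ≤ 1) ∧
    G.maxDegree ≤ 2 * G.minDegree - 2 := by
  classical
  -- If `δ = 0` then the empty matching contradicts `hno`.
  have hδ : 1 ≤ G.minDegree := by
    by_contra h
    push_neg at h
    have h0 : G.minDegree = 0 := by omega
    exact hno ⟨∅, ⟨by simp, by simp, by simp⟩, by simp [h0]⟩
  constructor
  · -- Part (1): at most one edge of each color from `v` to the endpoints of `e`.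
    intro M _ _ _ v _ e _ k
    refine (Set.ncard_le_one (Set.toFinite _)).mpr ?_
    rintro w₁ ⟨_, h1adj, h1c⟩ w₂ ⟨_, h2adj, h2c⟩
    by_contra hne
    exact hc s(v, w₁) h1adj s(v, w₂) h2adj (sym2_ne h1adj hne)
      ⟨v, Sym2.mem_mk_left _ _, Sym2.mem_mk_left _ _⟩ (h1c.trans h2c.symm)
  · -- Part (2): Δ(G) ≤ 2δ - 2.
    apply SimpleGraph.maxDegree_le_of_forall_degree_le
    intro v
    obtain ⟨M, ⟨hsub, hpair, hinj⟩, hcard, hv⟩ := hind v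
    have key : G.degree v ≤ 2 * M.card := by
      rw [← SimpleGraph.card_neighborFinset_eq_degree]
      set N := G.neighborFinset v with hN
      have hsplit := Finset.card_filter_add_card_filter_not
        (s := N) (p := fun w => ∃ e ∈ M, w ∈ e)
      -- Covered neighbors: at most one per edge of `M`, by triangle-freeness.
      have h1 : (N.filter (fun w => ∃ e ∈ M, w ∈ e)).card ≤ M.card := by
        apply Finset.card_le_card_of_injOn
          (fun w => if h : ∃ e ∈ M, w ∈ e then h.choose else s(v, v))
        · intro w hw
          simp only [Finset.mem_coe] at hw ⊢
          rw [Finset.mem_filter] at hw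
          rw [dif_pos hw.2]
          exact hw.2.choose_spec.1
        · intro w₁ hw₁ w₂ hw₂ heq
          rw [Finset.coe_filter, Set.mem_setOf_eq] at hw₁ hw₂
          obtain ⟨hw₁n, hw₁e⟩ := hw₁
          obtain ⟨hw₂n, hw₂e⟩ := hw₂
          simp only [dif_pos hw₁e, dif_pos hw₂e] at heq
          by_contra hne
          have he₁ := hw₁e.choose_spec
          have he₂ := hw₂e.choose_spec
          have hmem : w₁ ∈ hw₂e.choose := heq ▸ he₁.2
          have hedge : hw₂e.choose ∈ G.edgeSet := hsub he₂.1
          have hadj12 : G.Adj w₁ w₂ := adj_of_mem_mem hedge hmem he₂.2 hne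
          have hadj1 : G.Adj v w₁ := (SimpleGraph.mem_neighborFinset G v w₁).mp hw₁n
          have hadj2 : G.Adj v w₂ := (SimpleGraph.mem_neighborFinset G v w₂).mp hw₂n
          exact htf {v, w₁, w₂} (SimpleGraph.is3Clique_triple_iff.mpr ⟨hadj1, hadj2, hadj12⟩)
      -- Uncovered neighbors: each uses a color of `M`, else extend to a rainbow matching.
      have h2 : (N.filter (fun w => ¬ ∃ e ∈ M, w ∈ e)).card ≤ M.card := by
        have hcol : ∀ w ∈ N.filter (fun w => ¬ ∃ e ∈ M, w ∈ e),
            ∃ e ∈ M, c e = c s(v, w) := by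
          intro w hw
          rw [Finset.mem_filter] at hw
          obtain ⟨hwn, hwM⟩ := hw
          have hvw : G.Adj v w := (SimpleGraph.mem_neighborFinset G v w).mp hwn
          by_contra h
          push_neg at h
          have hnotmem : s(v, w) ∉ M := fun hmem => hv _ hmem (Sym2.mem_mk_left _ _)
          refine hno ⟨insert s(v, w) M, ⟨?_, ?_, ?_⟩, ?_⟩
          · rw [Finset.coe_insert, Set.insert_subset_iff]
            exact ⟨hvw, hsub⟩
          · rw [Finset.coe_insert]
            have hsym : Symmetric (fun e f : Sym2 V => ∀ u, u ∈ e → u ∉ f) :=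
              fun e f hef u huf hue => hef u hue huf
            haveI : Std.Symm (fun e f : Sym2 V => ∀ u, u ∈ e → u ∉ f) := ⟨fun _ _ h => hsym h⟩
            rw [Set.pairwise_insert_of_symmetric]
            refine ⟨hpair, fun e he _ u hu => ?_⟩
            rw [Sym2.mem_iff] at hu
            rcases hu with rfl | rfl
            · exact hv e he
            · exact fun hue => hwM ⟨e, he, hue⟩
          · rw [Finset.coe_insert]
            intro x hx y hy hxy
            rcases Set.mem_insert_iff.mp hx with rfl | hx' <;>
              rcases Set.mem_insert_iff.mp hy with rfl | hy'
            · rfl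
            · exact absurd hxy.symm (h y hy')
            · exact absurd hxy (h x hx')
            · exact hinj hx' hy' hxy
          · rw [Finset.card_insert_of_notMem hnotmem, hcard]
            omega
        apply Finset.card_le_card_of_injOn
          (fun w => if h : ∃ e ∈ M, c e = c s(v, w) then h.choose else s(v, v))
        · intro w hw
          simp only [Finset.mem_coe] at hw ⊢
          rw [dif_pos (hcol w hw)]
          exact (hcol w hw).choose_spec.1
        · intro w₁ hw₁' w₂ hw₂' heq
          have hw₁ := hw₁'
          have hw₂ := hw₂'
          rw [Finset.mem_coe] at hw₁ hw₂
          simp only [dif_pos (hcol w₁ hw₁), dif_pos (hcol w₂ hw₂)] at heq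
          by_contra hne
          have he₁ := (hcol w₁ hw₁).choose_spec
          have he₂ := (hcol w₂ hw₂).choose_spec
          have hceq : c s(v, w₁) = c s(v, w₂) := by
            rw [← he₁.2, ← he₂.2, heq]
          have hadj1 : G.Adj v w₁ :=
            (SimpleGraph.mem_neighborFinset G v w₁).mp (Finset.mem_of_mem_filter _ hw₁)
          have hadj2 : G.Adj v w₂ :=
            (SimpleGraph.mem_neighborFinset G v w₂).mp (Finset.mem_of_mem_filter _ hw₂)
          exact hc s(v, w₁) hadj1 s(v, w₂) hadj2 (sym2_ne hadj1 hne)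
            ⟨v, Sym2.mem_mk_left _ _, Sym2.mem_mk_left _ _⟩ hceq
      omega
    rw [hcard] at key
    omega
end

section
/- Let h and t be positive integers with t ≤ h, and let f_1, ..., f_h be nonnegative integers such that f_i ≤ 2(h − i) + 1 for all i, and such that the nonincreasing rearrangement f↓ of (f_i) does not majorize the sequence (t+1, t, t−1, ..., 1) (i.e., there exists p ∈ {1, ..., t+1} with f↓_p ≤ t + 1 − p). Then the sum f_1 + ... + f_h is at most t(2h − t). -/
/-- The nonincreasing rearrangement of a finite sequence, with 1-based indexing
(`sortedDesc f 1` is the largest value); `0` beyond the range. -/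
def sortedDesc {n : ℕ} (f : Fin n → ℕ) (p : ℕ) : ℕ :=
  if hp : p - 1 < n then f (Tuple.sort f (Fin.rev ⟨p - 1, hp⟩)) else 0

lemma sum_odds (n : ℕ) : ∑ j ∈ Finset.range n, (2 * j + 1) = n * n := by
  induction n with
  | zero => simp
  | succ k ih => rw [Finset.sum_range_succ, ih]; ring

theorem sum_le_of_not_majorize (h t : ℕ) (ht : 0 < t) (hth : t ≤ h) (f : Fin h → ℕ)
    (hf : ∀ i : Fin h, f i ≤ 2 * (h - ((i : ℕ) + 1)) + 1)
    (hmaj : ∃ p : ℕ, 1 ≤ p ∧ p ≤ t + 1 ∧ sortedDesc f p ≤ t + 1 - p) :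
    ∑ i, f i ≤ t * (2 * h - t) := by
  obtain ⟨p, hp1, hpt, hple⟩ := hmaj
  set σ := Tuple.sort f with hσ
  have hmono : Monotone (f ∘ σ) := Tuple.monotone_sort f
  have hsum : ∑ i, f i = ∑ j : Fin h, (f ∘ σ) j := (Equiv.sum_comp σ f).symm
  -- the j-th (0-based from top) value is at most 2j+1
  have hC : ∀ j : Fin h, (f ∘ σ) j ≤ 2 * (j : ℕ) + 1 := by
    intro j
    by_contra hlt
    push_neg at hlt
    have hsub : (Finset.Ici j).image σ ⊆
        Finset.univ.filter (fun i : Fin h => (i : ℕ) + (j : ℕ) + 1 < h) := by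
      intro i hi
      simp only [Finset.mem_image, Finset.mem_Ici] at hi
      obtain ⟨j', hj', rfl⟩ := hi
      have h1 : (f ∘ σ) j ≤ (f ∘ σ) j' := hmono hj'
      have h2 := hf (σ j')
      simp only [Function.comp_apply] at h1 hlt
      simp only [Finset.mem_filter, Finset.mem_univ, true_and]
      omega
    have hcard1 : ((Finset.Ici j).image σ).card = h - (j : ℕ) := by
      rw [Finset.card_image_of_injective _ σ.injective, Fin.card_Ici]
    have hcard2 : (Finset.univ.filter (fun i : Fin h => (i : ℕ) + (j : ℕ) + 1 < h)).card
        ≤ h - (j : ℕ) - 1 := by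
      have : (Finset.univ.filter (fun i : Fin h => (i : ℕ) + (j : ℕ) + 1 < h)).card
          ≤ (Finset.range (h - (j : ℕ) - 1)).card := by
        refine Finset.card_le_card_of_injOn (fun i => (i : ℕ)) ?_ ?_
        · intro i hi
          simp only [Finset.mem_coe, Finset.mem_filter] at hi
          simp only [Finset.mem_coe, Finset.mem_range]
          omega
        · intro a _ b _ hab
          exact Fin.val_injective hab
      simpa using this
    have := Finset.card_le_card hsub
    have hjh := j.isLt
    omega
  -- the small-value bound from the hypothesis
  by_cases hph : p - 1 < h
  · have hkey : (f ∘ σ) (Fin.rev ⟨p - 1, hph⟩) ≤ t + 1 - p := by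
      rw [sortedDesc, dif_pos hph] at hple
      exact hple
    have hsmall : ∀ j : Fin h, (j : ℕ) + p ≤ h → (f ∘ σ) j ≤ t + 1 - p := by
      intro j hj
      refine le_trans (hmono ?_) hkey
      have hv : ((⟨p - 1, hph⟩ : Fin h) : ℕ) = p - 1 := rfl
      rw [Fin.le_def, Fin.val_rev, hv]
      omega
    set a := h + 1 - p with ha
    have hah : a ≤ h := by omega
    calc ∑ i, f i = ∑ j : Fin h, (f ∘ σ) j := hsum
      _ ≤ ∑ j : Fin h, (if (j : ℕ) + p ≤ h then t + 1 - p else 2 * (j : ℕ) + 1) := by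
          apply Finset.sum_le_sum
          intro j _
          split
          · exact hsmall j ‹_›
          · exact hC j
      _ = ∑ j ∈ Finset.range h, (if j + p ≤ h then t + 1 - p else 2 * j + 1) :=
          Fin.sum_univ_eq_sum_range (fun j => if j + p ≤ h then t + 1 - p else 2 * j + 1) h
      _ = a * (t + 1 - p) + ∑ j ∈ Finset.Ico a h, (2 * j + 1) := by
          rw [← Finset.sum_range_add_sum_Ico _ hah]
          congr 1
          · rw [Finset.sum_congr rfl (fun j hj => if_pos (by
              simp only [Finset.mem_range] at hj; omega)), Finset.sum_const,
              Finset.card_range, smul_eq_mul]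
          · exact Finset.sum_congr rfl (fun j hj => if_neg (by
              simp only [Finset.mem_Ico] at hj; omega))
      _ = a * (t + 1 - p) + (h * h - a * a) := by
          have e1 : (∑ j ∈ Finset.range a, (2 * j + 1)) + ∑ j ∈ Finset.Ico a h, (2 * j + 1)
              = ∑ j ∈ Finset.range h, (2 * j + 1) := Finset.sum_range_add_sum_Ico _ hah
          rw [sum_odds, sum_odds] at e1
          omega
      _ ≤ t * (2 * h - t) := by
          have haa : a * a ≤ h * h := Nat.mul_le_mul hah hah
          zify [haa, show t ≤ 2 * h by omega, show p ≤ t + 1 from hpt]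
          have h1 : (0 : ℤ) ≤ (t : ℤ) + 1 - p := by exact_mod_cast by omega
          have h2 : (0 : ℤ) ≤ (h : ℤ) - t := by exact_mod_cast by omega
          have h3 : (a : ℤ) = (h : ℤ) + 1 - p := by
            have : p ≤ h + 1 := by omega
            omega
          nlinarith [mul_nonneg h1 h2]
  · -- p = h + 1, so t = h
    have hteq : t = h := by omega
    calc ∑ i, f i = ∑ j : Fin h, (f ∘ σ) j := hsum
      _ ≤ ∑ j : Fin h, (2 * (j : ℕ) + 1) := Finset.sum_le_sum (fun j _ => hC j)
      _ = ∑ j ∈ Finset.range h, (2 * j + 1) :=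
          Fin.sum_univ_eq_sum_range (fun j => 2 * j + 1) h
      _ = h * h := sum_odds h
      _ ≤ t * (2 * h - t) := by rw [show 2 * h - t = h by omega, hteq]
end

section
/- Every graph G contains a spanning subgraph H with the same minimum degree δ(G) = δ(H) in which every edge is incident to at least one vertex of degree exactly δ(G) in H. -/
open SimpleGraph
open scoped Classical

private lemma del_neighborFinset_left {V : Type*} [Fintype V] [DecidableEq V]
    (H : SimpleGraph V) (u v : V) (huv : H.Adj u v) :
    (H.deleteEdges {s(u, v)}).neighborFinset u = (H.neighborFinset u).erase v := by
  ext x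
  simp only [SimpleGraph.mem_neighborFinset, SimpleGraph.deleteEdges_adj,
    Set.mem_singleton_iff, Finset.mem_erase]
  constructor
  · rintro ⟨h1, h2⟩
    exact ⟨fun hx => h2 (by rw [hx]), h1⟩
  · rintro ⟨h1, h2⟩
    refine ⟨h2, fun hx => h1 ?_⟩
    rw [Sym2.congr_right] at hx
    exact hx

private lemma del_degree_left {V : Type*} [Fintype V] [DecidableEq V]
    (H : SimpleGraph V) (u v : V) (huv : H.Adj u v) :
    (H.deleteEdges {s(u, v)}).degree u = H.degree u - 1 := by
  rw [SimpleGraph.degree, del_neighborFinset_left H u v huv,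
    Finset.card_erase_of_mem (by simpa using huv)]
  rfl

private lemma del_degree_other {V : Type*} [Fintype V] [DecidableEq V]
    (H : SimpleGraph V) (u v w : V) (hwu : w ≠ u) (hwv : w ≠ v) :
    (H.deleteEdges {s(u, v)}).degree w = H.degree w := by
  rw [← SimpleGraph.card_neighborFinset_eq_degree, ← SimpleGraph.card_neighborFinset_eq_degree]
  congr 1
  ext x
  simp only [SimpleGraph.mem_neighborFinset, SimpleGraph.deleteEdges_adj,
    Set.mem_singleton_iff]
  constructor
  · exact fun h => h.1
  · intro h
    refine ⟨h, fun hx => ?_⟩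
    rw [Sym2.eq_iff] at hx
    tauto

/-- Every graph contains a spanning subgraph with the same minimum degree in which every edge
is incident to a vertex of degree exactly `δ(G)`. -/
theorem exists_spanning_subgraph_min_degree {V : Type*} [Fintype V] [DecidableEq V]
    (G : SimpleGraph V) [DecidableRel G.Adj] :
    ∃ H : SimpleGraph V, H ≤ G ∧ H.minDegree = G.minDegree ∧
      ∀ e ∈ H.edgeSet, ∃ v, v ∈ e ∧ H.degree v = G.minDegree := by
  suffices h : ∀ n (H : SimpleGraph V), H.edgeFinset.card = n → H ≤ G →
      H.minDegree = G.minDegree →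
      ∃ H' : SimpleGraph V, H' ≤ G ∧ H'.minDegree = G.minDegree ∧
        ∀ e ∈ H'.edgeSet, ∃ v, v ∈ e ∧ H'.degree v = G.minDegree by
    refine h G.edgeFinset.card G ?_ le_rfl ?_ <;> congr!
  intro n
  induction n using Nat.strong_induction_on with
  | _ n ih =>
    intro H hcard hle hmin
    by_cases hgood : ∀ e ∈ H.edgeSet, ∃ v, v ∈ e ∧ H.degree v = G.minDegree
    · exact ⟨H, hle, hmin, hgood⟩
    · push_neg at hgood
      obtain ⟨e, he, hbad⟩ := hgood
      revert he hbad
      induction e using Sym2.ind with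
      | _ u v =>
      intro he hbad
      rw [SimpleGraph.mem_edgeSet] at he
      have hNe : Nonempty V := ⟨u⟩
      have hdu : G.minDegree < H.degree u := by
        have := hbad u (by simp)
        have h2 := H.minDegree_le_degree u
        omega
      have hdv : G.minDegree < H.degree v := by
        have := hbad v (by simp)
        have h2 := H.minDegree_le_degree v
        omega
      set H' := H.deleteEdges {s(u, v)} with hH'
      have hle' : H' ≤ H := SimpleGraph.deleteEdges_le _
      have hdegall : ∀ w, G.minDegree ≤ H'.degree w := by
        intro w
        by_cases hwu : w = u
        · rw [hwu]
          show G.minDegree ≤ (H.deleteEdges {s(u, v)}).degree u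
          rw [del_degree_left H u v he]
          omega
        by_cases hwv : w = v
        · rw [hwv]
          have hswap : ({s(u, v)} : Set (Sym2 V)) = {s(v, u)} := by rw [Sym2.eq_swap]
          show G.minDegree ≤ (H.deleteEdges {s(u, v)}).degree v
          rw [Sym2.eq_swap (a := u) (b := v)]
          rw [del_degree_left H v u he.symm]
          omega
        · show G.minDegree ≤ (H.deleteEdges {s(u, v)}).degree w
          rw [del_degree_other H u v w hwu hwv, ← hmin]
          exact H.minDegree_le_degree w
      have hmin' : H'.minDegree = G.minDegree := by
        obtain ⟨w, hw⟩ := H.exists_minimal_degree_vertex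
        have hwu : w ≠ u := by intro h; subst h; omega
        have hwv : w ≠ v := by intro h; subst h; omega
        have hdw : H'.degree w = G.minDegree := by
          show (H.deleteEdges {s(u, v)}).degree w = G.minDegree
          rw [del_degree_other H u v w hwu hwv, ← hw, hmin]
        have h1 := H'.minDegree_le_degree w
        have h2 := SimpleGraph.le_minDegree_of_forall_le_degree H' G.minDegree hdegall
        omega
      have hsub : H'.edgeFinset ⊆ H.edgeFinset :=
        SimpleGraph.edgeFinset_subset_edgeFinset.mpr hle'
      have hmem : s(u, v) ∈ H.edgeFinset := by simpa using he
      have hnotmem : s(u, v) ∉ H'.edgeFinset := by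
        simp [hH', SimpleGraph.mem_edgeFinset]
      have hcard' : H'.edgeFinset.card < n := by
        rw [← hcard]
        exact Finset.card_lt_card (Finset.ssubset_iff_of_subset hsub |>.mpr
          ⟨s(u, v), hmem, hnotmem⟩)
      exact ih H'.edgeFinset.card hcard' H' (by convert rfl) (hle'.trans hle) (by convert hmin')
end
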